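/- Let α > 1 be a real number and let β, γ ≥ 0 be real numbers. Then min((α − 1)·γ, (α − 1)·β − γ) ≤ ((α − 1)²/(2α − 1))·(β + γ), with equality if and only if γ = ((α − 1)/α)·β. -/

import Mathlib

/-- **Key optimization step in the layered-hierarchy theorem.**
For real `α > 1` and `β, γ ≥ 0`:
`min((α − 1)·γ, (α − 1)·β − γ) ≤ ((α − 1)²/(2α − 1))·(β + γ)`,
with equality if and only if `γ = ((α − 1)/α)·β`. -/
theorem layered_hierarchy_optimization (α β γ : ℝ) (hα : 1 < α)
    (hβ : 0 ≤ β) (hγ : 0 ≤ γ) :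
    min ((α - 1) * γ) ((α - 1) * β - γ) ≤ (α - 1) ^ 2 / (2 * α - 1) * (β + γ)
    ∧ (min ((α - 1) * γ) ((α - 1) * β - γ) = (α - 1) ^ 2 / (2 * α - 1) * (β + γ)
        ↔ γ = (α - 1) / α * β) := by
  have h2 : (0:ℝ) < 2 * α - 1 := by linarith
  have h0 : (0:ℝ) < α := by linarith
  have key : (α - 1) ^ 2 / (2 * α - 1) * (β + γ)
      = (α * ((α - 1) * γ) + (α - 1) * ((α - 1) * β - γ)) / (2 * α - 1) := by
    field_simp
    ring
  constructor
  · rcases le_total ((α - 1) * γ) ((α - 1) * β - γ) with h | h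
    · rw [min_eq_left h, key, le_div_iff₀ h2]
      nlinarith
    · rw [min_eq_right h, key, le_div_iff₀ h2]
      nlinarith
  · constructor
    · intro heq
      rcases le_total ((α - 1) * γ) ((α - 1) * β - γ) with h | h
      · rw [min_eq_left h, key] at heq
        have h' : (α - 1) * γ * (2 * α - 1)
            = α * ((α - 1) * γ) + (α - 1) * ((α - 1) * β - γ) := by
          rw [eq_div_iff h2.ne'] at heq; linarith [heq]
        have hAB : α * γ = (α - 1) * β := by nlinarith
        field_simp
        linarith [hAB]
      · rw [min_eq_right h, key] at heq
        have h' : ((α - 1) * β - γ) * (2 * α - 1)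
            = α * ((α - 1) * γ) + (α - 1) * ((α - 1) * β - γ) := by
          rw [eq_div_iff h2.ne'] at heq; linarith [heq]
        have hAB : α * γ = (α - 1) * β := by nlinarith
        field_simp
        linarith [hAB]
    · intro hg
      subst hg
      have hAB : (α - 1) * ((α - 1) / α * β) = (α - 1) * β - (α - 1) / α * β := by
        field_simp
      rw [← hAB, min_self]
      rw [div_mul_eq_mul_div ((α - 1) ^ 2), eq_div_iff h2.ne']
      field_simp
      ring
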